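/- Let γ ∈ [0,1) and α ∈ (−1/2 + γ/2, 1/2 + γ/2), and set H = α − γ/2 + 1/2. Then the constant c(α,γ) := B(2α+1, 1−γ) + ∫₀^∞ ((1+u)^α − u^α)² u^{−γ} du is finite, and for every t ≥ 0 one has ∫_ℝ ((t−u)₊^α − (−u)₊^α)² |u|^{−γ} du = c(α,γ) · t^{2H} (in particular the left-hand integral is finite). Here x₊ = max(x,0) and x₊^α is interpreted as 0 when x₊ = 0. -/

import Mathlib

open MeasureTheory Set Real

/-- `plusPow x a = x₊^a`, interpreted as `0` when `x₊ = 0`. -/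
noncomputable def plusPow (x a : ℝ) : ℝ := if 0 < x then x ^ a else 0

/-- The Beta function `B(x,y) = ∫₀¹ u^(x-1) (1-u)^(y-1) du`. -/
noncomputable def betaFn (x y : ℝ) : ℝ :=
  ∫ u in Set.Ioo (0:ℝ) 1, u ^ (x - 1) * (1 - u) ^ (y - 1)



private lemma mvtBound {α : ℝ} (hα : α ≤ 1) {x : ℝ} (hx : 1 ≤ x) :
    |(1 + x) ^ α - x ^ α| ≤ |α| * x ^ (α - 1) := by
  have hx0 : (0:ℝ) < x := lt_of_lt_of_le one_pos hx
  have key : ‖(fun y : ℝ => y ^ α) (x + 1) - (fun y : ℝ => y ^ α) x‖ ≤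
      (|α| * x ^ (α - 1)) * ‖(x + 1) - x‖ := by
    refine (convex_Icc x (x+1)).norm_image_sub_le_of_norm_hasDerivWithin_le (f := fun y : ℝ => y ^ α) (C := |α| * x ^ (α - 1))
      (f' := fun y => α * y ^ (α - 1)) (fun y hy => ?_) (fun y hy => ?_) ?_ ?_
    · exact (Real.hasDerivAt_rpow_const
        (Or.inl (lt_of_lt_of_le hx0 hy.1).ne')).hasDerivWithinAt
    · rw [Real.norm_eq_abs, abs_mul, abs_of_nonneg (Real.rpow_nonneg
        (le_trans hx0.le hy.1) _)]
      exact mul_le_mul_of_nonneg_left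
        (Real.rpow_le_rpow_of_nonpos hx0 hy.1 (by linarith)) (abs_nonneg _)
    · exact ⟨le_refl x, by linarith⟩
    · exact ⟨by linarith, le_refl _⟩
  simpa [Real.norm_eq_abs, add_comm] using key

private lemma integrableOn_null' {f : ℝ → ℝ} {s : Set ℝ} (hs : volume s = 0) :
    IntegrableOn f s := by
  rw [IntegrableOn, Measure.restrict_eq_zero.mpr hs]
  exact integrable_zero_measure

private lemma sq_rpow' {x : ℝ} (hx : 0 < x) (a : ℝ) : (x ^ a) ^ 2 = x ^ (2 * a) := by
  rw [sq, ← Real.rpow_add hx, two_mul]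

private lemma betaAux {p q : ℝ} (hp : -1 < p) (hq : -1 < q) :
    IntegrableOn (fun u : ℝ => u ^ p * (1 - u) ^ q) (Set.Ioc 0 1) := by
  have hmeas : Measurable (fun u : ℝ => u ^ p * (1 - u) ^ q) := by
    have m1 : Measurable fun u : ℝ => u ^ p := by measurability
    have m2 : Measurable fun u : ℝ => (1 - u) ^ q :=
      (show Measurable fun v : ℝ => v ^ q by measurability).comp
        (measurable_const.sub measurable_id)
    exact m1.mul m2
  have h1 : IntegrableOn (fun u : ℝ => u ^ p * (1 - u) ^ q) (Set.Ioc 0 (1/2)) := by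
    set C : ℝ := max 1 ((1/2 : ℝ) ^ q) with hC
    have hmaj : IntegrableOn (fun u : ℝ => C * u ^ p) (Set.Ioc 0 (1/2)) :=
      ((intervalIntegrable_iff_integrableOn_Ioc_of_le (by norm_num)).1
        (intervalIntegral.intervalIntegrable_rpow' hp)).const_mul C
    refine hmaj.mono' hmeas.aestronglyMeasurable ?_
    refine (ae_restrict_iff' measurableSet_Ioc).2 (Filter.Eventually.of_forall fun u hu => ?_)
    have hu0 : 0 < u := hu.1
    have hu1 : u ≤ 1/2 := hu.2
    have h1u : (0:ℝ) < 1 - u := by linarith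
    have hb : (1 - u) ^ q ≤ C := by
      rcases le_or_gt 0 q with hq0 | hq0
      · refine le_trans ?_ (le_max_left _ _)
        calc (1-u) ^ q ≤ 1 ^ q := Real.rpow_le_rpow h1u.le (by linarith) hq0
        _ = 1 := Real.one_rpow q
      · exact le_trans (Real.rpow_le_rpow_of_nonpos (by norm_num) (by linarith) hq0.le)
          (le_max_right _ _)
    rw [Real.norm_eq_abs, abs_of_nonneg (mul_nonneg (Real.rpow_nonneg hu0.le _)
      (Real.rpow_nonneg h1u.le _))]
    calc u ^ p * (1-u) ^ q ≤ u ^ p * C :=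
          mul_le_mul_of_nonneg_left hb (Real.rpow_nonneg hu0.le _)
      _ = C * u ^ p := mul_comm _ _
  have h2 : IntegrableOn (fun u : ℝ => u ^ p * (1 - u) ^ q) (Set.Ioc (1/2) 1) := by
    set C : ℝ := max 1 ((1/2 : ℝ) ^ p) with hC
    have hquot : IntervalIntegrable (fun u : ℝ => (1 - u) ^ q) volume (1 - 0) (1 - 1/2) :=
      (intervalIntegral.intervalIntegrable_rpow' hq (a := 0) (b := 1/2)).comp_sub_left 1
    rw [(by norm_num : (1:ℝ) - 1/2 = 1/2), (by norm_num : (1:ℝ) - 0 = 1)] at hquot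
    replace hquot := hquot.symm
    have hmaj : IntegrableOn (fun u : ℝ => C * (1 - u) ^ q) (Set.Ioc (1/2) 1) :=
      ((intervalIntegrable_iff_integrableOn_Ioc_of_le (by norm_num : (1:ℝ)/2 ≤ 1)).1
        hquot).const_mul C
    refine hmaj.mono' hmeas.aestronglyMeasurable ?_
    refine (ae_restrict_iff' measurableSet_Ioc).2 (Filter.Eventually.of_forall fun u hu => ?_)
    have hu0 : (1:ℝ)/2 < u := hu.1
    have hu1 : u ≤ 1 := hu.2
    have h1u : (0:ℝ) ≤ 1 - u := by linarith
    have hb : u ^ p ≤ C := by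
      rcases le_or_gt 0 p with hp0 | hp0
      · refine le_trans ?_ (le_max_left _ _)
        calc u ^ p ≤ 1 ^ p := Real.rpow_le_rpow (by linarith) hu1 hp0
          _ = 1 := Real.one_rpow p
      · exact le_trans (Real.rpow_le_rpow_of_nonpos (by norm_num) hu0.le hp0.le)
          (le_max_right _ _)
    rw [Real.norm_eq_abs, abs_of_nonneg (mul_nonneg (Real.rpow_nonneg (by linarith) _)
      (Real.rpow_nonneg h1u _))]
    exact mul_le_mul_of_nonneg_right hb (Real.rpow_nonneg h1u _)
  have hset : Set.Ioc (0:ℝ) 1 = Set.Ioc 0 (1/2) ∪ Set.Ioc (1/2) 1 :=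
    (Set.Ioc_union_Ioc_eq_Ioc (by norm_num) (by norm_num)).symm
  rw [hset]
  exact h1.union h2

private lemma integrableOn_tailFn {γ α : ℝ} (hγ0 : 0 ≤ γ) (hγ1 : γ < 1)
    (hα1 : -(1/2) + γ/2 < α) (hα2 : α < 1/2 + γ/2) :
    IntegrableOn (fun u : ℝ => ((1+u) ^ α - u ^ α)^2 * u ^ (-γ)) (Set.Ioi 0) := by
  have hmeas : Measurable (fun u : ℝ => ((1+u) ^ α - u ^ α)^2 * u ^ (-γ)) := by
    have m0 : Measurable fun u : ℝ => u ^ α := by measurability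
    have m3 : Measurable fun u : ℝ => u ^ (-γ) := by measurability
    exact (((m0.comp (measurable_const.add measurable_id)).sub m0).pow_const 2).mul m3
  have h1 : IntegrableOn (fun u : ℝ => ((1+u) ^ α - u ^ α)^2 * u ^ (-γ)) (Set.Ioc 0 1) := by
    set C : ℝ := max 1 ((2:ℝ) ^ (2*α)) with hC
    have hmaj : IntegrableOn
        (fun u : ℝ => 2*C * u ^ (-γ) + 2 * u ^ (2*α - γ)) (Set.Ioc 0 1) := by
      refine Integrable.add ?_ ?_
      · exact ((intervalIntegrable_iff_integrableOn_Ioc_of_le zero_le_one).1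
          (intervalIntegral.intervalIntegrable_rpow' (by linarith))).const_mul _
      · exact ((intervalIntegrable_iff_integrableOn_Ioc_of_le zero_le_one).1
          (intervalIntegral.intervalIntegrable_rpow' (by linarith))).const_mul _
    refine hmaj.mono' hmeas.aestronglyMeasurable ?_
    refine (ae_restrict_iff' measurableSet_Ioc).2 (Filter.Eventually.of_forall fun u hu => ?_)
    have hu0 : 0 < u := hu.1
    have hu1 : u ≤ 1 := hu.2
    have h1u : (0:ℝ) < 1 + u := by linarith
    have ha2 : ((1+u) ^ α)^2 = (1+u) ^ (2*α) := sq_rpow' h1u α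
    have hb2 : (u ^ α)^2 = u ^ (2*α) := sq_rpow' hu0 α
    have hCb : (1+u) ^ (2*α) ≤ C := by
      rcases le_or_gt 0 (2*α) with h0 | h0
      · exact le_trans (Real.rpow_le_rpow h1u.le (by linarith) h0) (le_max_right _ _)
      · refine le_trans ?_ (le_max_left _ _)
        calc (1+u) ^ (2*α) ≤ 1 ^ (2*α) :=
              Real.rpow_le_rpow_of_nonpos one_pos (by linarith) h0.le
          _ = 1 := Real.one_rpow _
    have hw : (0:ℝ) ≤ u ^ (-γ) := Real.rpow_nonneg hu0.le _
    have hsplit : u ^ (2*α - γ) = u ^ (2*α) * u ^ (-γ) := by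
      rw [← Real.rpow_add hu0]; ring_nf
    have hkey : ((1+u) ^ α - u ^ α)^2 ≤ 2*C + 2 * u ^ (2*α) := by
      nlinarith [sq_nonneg ((1+u) ^ α + u ^ α), hCb, ha2, hb2,
        Real.rpow_nonneg hu0.le (2*α)]
    rw [Real.norm_eq_abs, abs_of_nonneg (mul_nonneg (sq_nonneg _) hw)]
    calc ((1+u) ^ α - u ^ α)^2 * u ^ (-γ) ≤ (2*C + 2 * u ^ (2*α)) * u ^ (-γ) :=
          mul_le_mul_of_nonneg_right hkey hw
      _ = 2*C * u ^ (-γ) + 2 * u ^ (2*α - γ) := by rw [hsplit]; ring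
  have h2 : IntegrableOn (fun u : ℝ => ((1+u) ^ α - u ^ α)^2 * u ^ (-γ)) (Set.Ioi 1) := by
    have hmaj : IntegrableOn (fun u : ℝ => α^2 * u ^ (2*α - 2 - γ)) (Set.Ioi 1) :=
      ((integrableOn_Ioi_rpow_iff one_pos).2 (by linarith)).const_mul _
    refine hmaj.mono' hmeas.aestronglyMeasurable ?_
    refine (ae_restrict_iff' measurableSet_Ioi).2 (Filter.Eventually.of_forall fun u hu => ?_)
    have hu1 : (1:ℝ) ≤ u := le_of_lt hu
    have hu0 : (0:ℝ) < u := lt_of_lt_of_le one_pos hu1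
    have hw : (0:ℝ) ≤ u ^ (-γ) := Real.rpow_nonneg hu0.le _
    have hmvt := mvtBound (by linarith : α ≤ 1) hu1
    have habs : ((1+u) ^ α - u ^ α)^2 ≤ (|α| * u ^ (α-1))^2 := by
      rw [← sq_abs]
      exact pow_le_pow_left₀ (abs_nonneg _) hmvt 2
    have hsq : (|α| * u ^ (α-1))^2 = α^2 * u ^ (2*α - 2) := by
      rw [mul_pow, sq_abs, sq_rpow' hu0]
      ring_nf
    have hsplit : u ^ (2*α - 2) * u ^ (-γ) = u ^ (2*α - 2 - γ) := by
      rw [← Real.rpow_add hu0]; ring_nf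
    rw [Real.norm_eq_abs, abs_of_nonneg (mul_nonneg (sq_nonneg _) hw)]
    calc ((1+u) ^ α - u ^ α)^2 * u ^ (-γ) ≤ α^2 * u ^ (2*α-2) * u ^ (-γ) := by
          rw [← hsq]; exact mul_le_mul_of_nonneg_right habs hw
      _ = α^2 * u ^ (2*α - 2 - γ) := by rw [mul_assoc, hsplit]
  have hset : Set.Ioi (0:ℝ) = Set.Ioc 0 1 ∪ Set.Ioi 1 := (Set.Ioc_union_Ioi_eq_Ioi zero_le_one).symm
  rw [hset]
  exact h1.union h2

private lemma integrableOn_Iio_of_neg {f : ℝ → ℝ}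
    (h : IntegrableOn (fun x => f (-x)) (Set.Ioi (0:ℝ))) :
    IntegrableOn f (Set.Iio (0:ℝ)) := by
  have h1 : Integrable ((Set.Ioi (0:ℝ)).indicator (fun x => f (-x))) volume :=
    (integrable_indicator_iff measurableSet_Ioi).2 h
  have h2 := h1.comp_neg
  have h3 : (fun x => (Set.Ioi (0:ℝ)).indicator (fun y => f (-y)) (-x)) =
      (Set.Iio (0:ℝ)).indicator f := by
    funext x
    simp only [Set.indicator, Set.mem_Ioi, Set.mem_Iio, neg_neg]
    by_cases hx : x < 0
    · rw [if_pos (by linarith), if_pos hx]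
    · rw [if_neg (by simpa using hx), if_neg hx]
  rw [h3] at h2
  exact (integrable_indicator_iff measurableSet_Iio).1 h2

/-- Variance and self-similarity of GFBM: `E[X(t)²] = c(α,γ) t^{2H}`. -/
theorem gfbm_variance (γ α : ℝ) (hγ0 : 0 ≤ γ) (hγ1 : γ < 1)
    (hα1 : -(1/2) + γ/2 < α) (hα2 : α < 1/2 + γ/2) :
    IntegrableOn (fun u : ℝ => u ^ (2*α+1-1) * (1-u) ^ (1-γ-1)) (Set.Ioo 0 1) ∧
    IntegrableOn (fun u : ℝ => (plusPow (1+u) α - plusPow u α)^2 * u ^ (-γ)) (Set.Ioi 0) ∧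
    ∀ t : ℝ, 0 ≤ t →
      Integrable (fun u : ℝ => (plusPow (t-u) α - plusPow (-u) α)^2 * |u| ^ (-γ)) ∧
      ∫ u : ℝ, (plusPow (t-u) α - plusPow (-u) α)^2 * |u| ^ (-γ) =
        (betaFn (2*α+1) (1-γ) +
          ∫ u in Set.Ioi (0:ℝ), (plusPow (1+u) α - plusPow u α)^2 * u ^ (-γ)) *
        t ^ (2*(α - γ/2 + 1/2)) := by
  have hp2α : (-1:ℝ) < 2*α := by linarith
  have hqγ : (-1:ℝ) < -γ := by linarith
  -- the three model functions
  set hfun : ℝ → ℝ := fun w => ((1+w) ^ α - w ^ α)^2 * w ^ (-γ) with hfun_def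
  set G : ℝ → ℝ := fun v => v ^ (-γ) * (1 - v) ^ (2*α) with hG_def
  set fb : ℝ → ℝ := fun x => x ^ (2*α) * (1 - x) ^ (-γ) with hfb_def
  have hInt : IntegrableOn hfun (Set.Ioi 0) := integrableOn_tailFn hγ0 hγ1 hα1 hα2
  have hGIoc : IntegrableOn G (Set.Ioc 0 1) := betaAux hqγ hp2α
  have hfbIoc : IntegrableOn fb (Set.Ioc 0 1) := betaAux hp2α hqγ
  -- conjunct 1
  have c1 : IntegrableOn (fun u : ℝ => u ^ (2*α+1-1) * (1-u) ^ (1-γ-1)) (Set.Ioo 0 1) := by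
    rw [show (2*α+1-1) = 2*α by ring, show (1-γ-1) = -γ by ring]
    exact hfbIoc.mono_set Set.Ioo_subset_Ioc_self
  -- conjunct 2
  have hplusEq : Set.EqOn hfun
      (fun u : ℝ => (plusPow (1+u) α - plusPow u α)^2 * u ^ (-γ)) (Set.Ioi 0) := by
    intro u hu
    have hu0 : (0:ℝ) < u := hu
    simp only [hfun_def, plusPow, if_pos hu0, if_pos (by linarith : (0:ℝ) < 1 + u)]
  have c2 : IntegrableOn (fun u : ℝ => (plusPow (1+u) α - plusPow u α)^2 * u ^ (-γ))
      (Set.Ioi 0) := hInt.congr_fun hplusEq measurableSet_Ioi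
  have hIeq : ∫ u in Set.Ioi (0:ℝ), (plusPow (1+u) α - plusPow u α)^2 * u ^ (-γ)
      = ∫ w in Set.Ioi (0:ℝ), hfun w :=
    setIntegral_congr_fun measurableSet_Ioi hplusEq.symm
  -- beta value
  have betaVal : betaFn (2*α+1) (1-γ) = ∫ x in Set.Ioo (0:ℝ) 1, fb x := by
    rw [betaFn, show (2*α+1-1) = 2*α by ring, show (1-γ-1) = -γ by ring]
  have GIoo_eq_beta : (∫ v in (0:ℝ)..1, G v) = betaFn (2*α+1) (1-γ) := by
    have hfbG : ∀ v : ℝ, G v = fb (1 - v) := fun v => by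
      simp only [hG_def, hfb_def, sub_sub_cancel]; ring
    calc (∫ v in (0:ℝ)..1, G v) = ∫ v in (0:ℝ)..1, fb (1 - v) := by simp only [hfbG]
      _ = ∫ x in (1-(1:ℝ))..(1-(0:ℝ)), fb x := intervalIntegral.integral_comp_sub_left fb 1
      _ = ∫ x in (0:ℝ)..1, fb x := by norm_num
      _ = ∫ x in Set.Ioc (0:ℝ) 1, fb x := intervalIntegral.integral_of_le zero_le_one
      _ = ∫ x in Set.Ioo (0:ℝ) 1, fb x := integral_Ioc_eq_integral_Ioo
      _ = betaFn (2*α+1) (1-γ) := betaVal.symm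
  refine ⟨c1, c2, fun t ht0 => ?_⟩
  rcases eq_or_lt_of_le ht0 with rfl | ht
  · -- t = 0
    have hzero : (fun u : ℝ => (plusPow (0-u) α - plusPow (-u) α)^2 * |u| ^ (-γ))
        = fun _ : ℝ => (0:ℝ) := by
      funext u
      rw [zero_sub, sub_self]
      ring
    rw [hzero]
    refine ⟨integrable_zero _ _ _, ?_⟩
    rw [integral_zero, Real.zero_rpow (by linarith : (0:ℝ) < 2*(α - γ/2 + 1/2)).ne', mul_zero]
  · -- t > 0
    set g : ℝ → ℝ := fun u => (plusPow (t-u) α - plusPow (-u) α)^2 * |u| ^ (-γ) with hg_def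
    set c₀ : ℝ := t ^ (2*α - γ) with hc0_def
    have htne : ∀ y : ℝ, t ^ y ≠ 0 := fun y => (Real.rpow_pos_of_pos ht y).ne'
    -- pointwise identities
    have eqOnIci : Set.EqOn (fun _ : ℝ => (0:ℝ)) g (Set.Ici t) := by
      intro u hu
      have h1 : ¬ (0:ℝ) < t - u := by simp only [Set.mem_Ici] at hu; linarith
      have h2 : ¬ (0:ℝ) < -u := by simp only [Set.mem_Ici] at hu; linarith
      simp only [hg_def, plusPow, if_neg h1, if_neg h2, sub_self]
      ring
    have eqOnIoo : Set.EqOn (fun u : ℝ => c₀ * G (u * t⁻¹)) g (Set.Ioo 0 t) := by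
      intro u hu
      obtain ⟨hu0, hut⟩ := hu
      have htu : (0:ℝ) < t - u := by linarith
      have hgu : g u = (t-u) ^ (2*α) * u ^ (-γ) := by
        simp only [hg_def, plusPow, if_pos htu, if_neg (by linarith : ¬ (0:ℝ) < -u),
          abs_of_pos hu0, sub_zero]
        rw [sq_rpow' htu]
      rw [hgu]
      have e1 : (1:ℝ) - u * t⁻¹ = (t - u) * t⁻¹ := by field_simp
      simp only [hG_def]
      rw [e1, Real.mul_rpow hu0.le (inv_nonneg.2 ht.le),
        Real.mul_rpow htu.le (inv_nonneg.2 ht.le),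
        Real.inv_rpow ht.le, Real.inv_rpow ht.le,
        ← Real.rpow_neg ht.le, ← Real.rpow_neg ht.le]
      have hone : c₀ * (t ^ (-(-γ)) * t ^ (-(2*α))) = 1 := by
        rw [hc0_def, ← Real.rpow_add ht, ← Real.rpow_add ht,
          show (2*α - γ + (- -γ + -(2*α))) = 0 by ring, Real.rpow_zero]
      calc c₀ * (u ^ (-γ) * t ^ (-(-γ)) * ((t-u) ^ (2*α) * t ^ (-(2*α))))
          = (c₀ * (t ^ (-(-γ)) * t ^ (-(2*α)))) * ((t-u) ^ (2*α) * u ^ (-γ)) := by ring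
        _ = (t-u) ^ (2*α) * u ^ (-γ) := by rw [hone, one_mul]
    have eqOnNeg : Set.EqOn (fun v : ℝ => c₀ * hfun (t⁻¹ * v)) (fun v => g (-v))
        (Set.Ioi 0) := by
      intro v hv
      have hv0 : (0:ℝ) < v := hv
      dsimp only
      have htv : (0:ℝ) < t + v := by linarith
      have hgv : g (-v) = ((t+v) ^ α - v ^ α)^2 * v ^ (-γ) := by
        simp only [hg_def, sub_neg_eq_add, neg_neg, abs_neg, abs_of_pos hv0, plusPow,
          if_pos htv, if_pos hv0]
      rw [hgv]
      have e1 : (1:ℝ) + t⁻¹ * v = (t + v) * t⁻¹ := by field_simp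
      simp only [hfun_def]
      rw [e1, Real.mul_rpow htv.le (inv_nonneg.2 ht.le),
        show t⁻¹ * v = v * t⁻¹ by ring, Real.mul_rpow hv0.le (inv_nonneg.2 ht.le),
        Real.mul_rpow hv0.le (inv_nonneg.2 ht.le),
        Real.inv_rpow ht.le, Real.inv_rpow ht.le,
        ← Real.rpow_neg ht.le, ← Real.rpow_neg ht.le]
      have hfac : (t+v) ^ α * t ^ (-α) - v ^ α * t ^ (-α) = t ^ (-α) * ((t+v) ^ α - v ^ α) := by
        ring
      rw [hfac, mul_pow, sq_rpow' ht]
      have hone : c₀ * (t ^ (2 * -α) * t ^ (-(-γ))) = 1 := by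
        rw [hc0_def, ← Real.rpow_add ht, ← Real.rpow_add ht,
          show (2*α - γ + (2 * -α + - -γ)) = 0 by ring, Real.rpow_zero]
      calc c₀ * (t ^ (2 * -α) * ((t+v) ^ α - v ^ α)^2 * (v ^ (-γ) * t ^ (-(-γ))))
          = (c₀ * (t ^ (2 * -α) * t ^ (-(-γ)))) * (((t+v) ^ α - v ^ α)^2 * v ^ (-γ)) := by
            ring
        _ = ((t+v) ^ α - v ^ α)^2 * v ^ (-γ) := by rw [hone, one_mul]
    -- integrability pieces
    have hGII : IntervalIntegrable G volume 0 1 :=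
      (intervalIntegrable_iff_integrableOn_Ioc_of_le zero_le_one).2 hGIoc
    have hJ : IntervalIntegrable (fun x => G (x * t⁻¹)) volume 0 t := by
      have h := hGII.comp_mul_right (c := t⁻¹)
      rw [(by simp : (0:ℝ)/t⁻¹ = 0), (by rw [one_div, inv_inv] : (1:ℝ)/t⁻¹ = t)] at h
      exact h
    have hIooInt : IntegrableOn (fun x => c₀ * G (x * t⁻¹)) (Set.Ioo 0 t) :=
      (intervalIntegrable_iff_integrableOn_Ioo_of_le ht.le).1 (hJ.const_mul c₀)
    have gIooInt : IntegrableOn g (Set.Ioo 0 t) :=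
      hIooInt.congr_fun eqOnIoo measurableSet_Ioo
    have gIciInt : IntegrableOn g (Set.Ici t) :=
      ((integrable_zero _ _ _).integrableOn).congr_fun eqOnIci measurableSet_Ici
    have gIoiInt : IntegrableOn g (Set.Ioi 0) := by
      rw [← Set.Ioo_union_Ici_eq_Ioi ht]
      exact gIooInt.union gIciInt
    have hcomp : IntegrableOn (fun x => hfun (t⁻¹ * x)) (Set.Ioi 0) := by
      refine (integrableOn_Ioi_comp_mul_left_iff hfun 0 (inv_pos.2 ht)).2 ?_
      rw [mul_zero]
      exact hInt
    have hFInt : IntegrableOn (fun x => c₀ * hfun (t⁻¹ * x)) (Set.Ioi 0) :=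
      hcomp.const_mul c₀
    have gnegInt : IntegrableOn (fun x => g (-x)) (Set.Ioi 0) :=
      hFInt.congr_fun eqOnNeg measurableSet_Ioi
    have gIioInt : IntegrableOn g (Set.Iio 0) := integrableOn_Iio_of_neg gnegInt
    have gIicInt : IntegrableOn g (Set.Iic 0) := by
      rw [← Set.Iio_union_right]
      exact gIioInt.union (integrableOn_null' (by simp))
    have gInt : Integrable g := by
      rw [← integrableOn_univ, ← Set.Iic_union_Ioi (a := (0:ℝ))]
      exact gIicInt.union gIoiInt
    refine ⟨gInt, ?_⟩
    -- integral computation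
    have hsplit : (∫ u : ℝ, g u) = (∫ u in Set.Iic (0:ℝ), g u) + ∫ u in Set.Ioi (0:ℝ), g u :=
      (intervalIntegral.integral_Iic_add_Ioi gIicInt gIoiInt).symm
    have EIic : (∫ u in Set.Iic (0:ℝ), g u) = c₀ * (t * ∫ w in Set.Ioi (0:ℝ), hfun w) := by
      have hneg := integral_comp_neg_Ioi 0 g
      rw [neg_zero] at hneg
      rw [← hneg, setIntegral_congr_fun measurableSet_Ioi eqOnNeg.symm, integral_const_mul,
        integral_comp_mul_left_Ioi hfun 0 (inv_pos.2 ht), mul_zero, inv_inv, smul_eq_mul]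
    have EIoi : (∫ u in Set.Ioi (0:ℝ), g u) = c₀ * (t * betaFn (2*α+1) (1-γ)) := by
      have hdisj : Disjoint (Set.Ioo 0 t) (Set.Ici t) := by
        rw [Set.disjoint_left]
        intro a ha hb
        exact absurd hb (not_le.2 ha.2)
      rw [← Set.Ioo_union_Ici_eq_Ioi ht,
        setIntegral_union hdisj measurableSet_Ici gIooInt gIciInt,
        setIntegral_congr_fun measurableSet_Ici eqOnIci.symm, integral_zero, add_zero,
        setIntegral_congr_fun measurableSet_Ioo eqOnIoo.symm,
        ← integral_Ioc_eq_integral_Ioo, ← intervalIntegral.integral_of_le ht.le,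
        intervalIntegral.integral_const_mul,
        intervalIntegral.integral_comp_mul_right G (inv_ne_zero ht.ne'),
        zero_mul, mul_inv_cancel₀ ht.ne', inv_inv, smul_eq_mul, GIoo_eq_beta]
    have hct : c₀ * t = t ^ (2*(α - γ/2 + 1/2)) := by
      rw [show (2*(α - γ/2 + 1/2)) = 2*α - γ + 1 by ring, Real.rpow_add_one ht.ne']
    calc (∫ u : ℝ, g u) = c₀ * (t * ∫ w in Set.Ioi (0:ℝ), hfun w)
          + c₀ * (t * betaFn (2*α+1) (1-γ)) := by rw [hsplit, EIic, EIoi]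
      _ = (betaFn (2*α+1) (1-γ) + ∫ w in Set.Ioi (0:ℝ), hfun w) * (c₀ * t) := by ring
      _ = _ := by rw [hct, hIeq]
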